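/- Let I = ⟨x_1x_2, x_2x_3, x_4x_5, x_5x_6⟩ ⊂ K[x_1,…,x_6] over a field K (the edge ideal of the disjoint union of two paths on three vertices). Then v(I^k) = 2k for all k ≥ 1; in particular v(I^k) ≠ 2k − 1 for every k ≥ 1. -/

import Mathlib

open MvPolynomial Pointwise

noncomputable section St18

/-- exponent vectors of the four generators -/
noncomputable def st18g1 : Fin 6 →₀ ℕ := Finsupp.single 0 1 + Finsupp.single 1 1
noncomputable def st18g2 : Fin 6 →₀ ℕ := Finsupp.single 1 1 + Finsupp.single 2 1
noncomputable def st18g3 : Fin 6 →₀ ℕ := Finsupp.single 3 1 + Finsupp.single 4 1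
noncomputable def st18g4 : Fin 6 →₀ ℕ := Finsupp.single 4 1 + Finsupp.single 5 1

def st18S (k : ℕ) : Set (Fin 6 →₀ ℕ) :=
  {v | ∃ a b c e : ℕ, a + b + c + e = k ∧
    v = a • st18g1 + b • st18g2 + c • st18g3 + e • st18g4}

/-- the monomial ideal with exponents `st18S k` -/
def st18J (K : Type*) [Field K] (k : ℕ) : Ideal (MvPolynomial (Fin 6) K) :=
  Ideal.span ((fun s => monomial s (1 : K)) '' st18S k)

lemma st18S_apply {k : ℕ} {v : Fin 6 →₀ ℕ} (hv : v ∈ st18S k) :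
    ∃ a b c e : ℕ, a + b + c + e = k ∧ v 0 = a ∧ v 1 = a + b ∧ v 2 = b ∧
      v 3 = c ∧ v 4 = c + e ∧ v 5 = e := by
  obtain ⟨a, b, c, e, hk, rfl⟩ := hv
  refine ⟨a, b, c, e, hk, ?_, ?_, ?_, ?_, ?_, ?_⟩ <;>
    simp [st18g1, st18g2, st18g3, st18g4, Finsupp.single_apply]

lemma st18S_add {k l : ℕ} {v w : Fin 6 →₀ ℕ} (hv : v ∈ st18S k) (hw : w ∈ st18S l) :
    v + w ∈ st18S (k + l) := by
  obtain ⟨a, b, c, e, hk, rfl⟩ := hv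
  obtain ⟨a', b', c', e', hl, rfl⟩ := hw
  refine ⟨a + a', b + b', c + c', e + e', by omega, ?_⟩
  simp only [add_smul]
  abel

lemma st18S_mem_g1 : st18g1 ∈ st18S 1 := ⟨1, 0, 0, 0, by omega, by simp⟩
lemma st18S_mem_g2 : st18g2 ∈ st18S 1 := ⟨0, 1, 0, 0, by omega, by simp⟩
lemma st18S_mem_g3 : st18g3 ∈ st18S 1 := ⟨0, 0, 1, 0, by omega, by simp⟩
lemma st18S_mem_g4 : st18g4 ∈ st18S 1 := ⟨0, 0, 0, 1, by omega, by simp⟩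

lemma st18S_succ {k : ℕ} {v : Fin 6 →₀ ℕ} (hv : v ∈ st18S (k + 1)) :
    ∃ v' ∈ st18S k, ∃ w ∈ st18S 1, v = v' + w := by
  obtain ⟨a, b, c, e, hk, rfl⟩ := hv
  rcases (by omega : 1 ≤ a ∨ 1 ≤ b ∨ 1 ≤ c ∨ 1 ≤ e) with ha | hb | hc | he
  · obtain ⟨a', rfl⟩ := Nat.exists_eq_add_of_le ha
    exact ⟨a' • st18g1 + b • st18g2 + c • st18g3 + e • st18g4,
      ⟨a', b, c, e, by omega, rfl⟩, st18g1, st18S_mem_g1, by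
        simp only [add_smul, one_smul]; abel⟩
  · obtain ⟨b', rfl⟩ := Nat.exists_eq_add_of_le hb
    exact ⟨a • st18g1 + b' • st18g2 + c • st18g3 + e • st18g4,
      ⟨a, b', c, e, by omega, rfl⟩, st18g2, st18S_mem_g2, by
        simp only [add_smul, one_smul]; abel⟩
  · obtain ⟨c', rfl⟩ := Nat.exists_eq_add_of_le hc
    exact ⟨a • st18g1 + b • st18g2 + c' • st18g3 + e • st18g4,
      ⟨a, b, c', e, by omega, rfl⟩, st18g3, st18S_mem_g3, by
        simp only [add_smul, one_smul]; abel⟩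
  · obtain ⟨e', rfl⟩ := Nat.exists_eq_add_of_le he
    exact ⟨a • st18g1 + b • st18g2 + c • st18g3 + e' • st18g4,
      ⟨a, b, c, e', by omega, rfl⟩, st18g4, st18S_mem_g4, by
        simp only [add_smul, one_smul]; abel⟩

variable {K : Type*} [Field K]

lemma st18_X_mul_X (i j : Fin 6) :
    (X i : MvPolynomial (Fin 6) K) * X j
      = monomial (Finsupp.single i 1 + Finsupp.single j 1) 1 := by
  rw [← pow_one (X i), X_pow_eq_monomial, ← pow_one (X j), X_pow_eq_monomial,
    monomial_mul, one_mul]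

lemma st18S_zero : st18S 0 = {0} := by
  ext v
  constructor
  · rintro ⟨a, b, c, e, hk, rfl⟩
    obtain ⟨rfl, rfl, rfl, rfl⟩ : a = 0 ∧ b = 0 ∧ c = 0 ∧ e = 0 := by omega
    simp
  · rintro rfl
    exact ⟨0, 0, 0, 0, by omega, by simp⟩

lemma st18J_pow (k : ℕ) : (st18J K 1) ^ k = st18J K k := by
  induction k with
  | zero =>
    rw [pow_zero, st18J, st18S_zero]
    rw [Set.image_singleton, monomial_zero', C_1, Ideal.span_singleton_one]
    exact Ideal.one_eq_top
  | succ n ih =>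
    rw [pow_succ, ih, st18J, st18J, st18J, Ideal.span_mul_span']
    congr 1
    ext x
    constructor
    · rw [Set.mem_mul]
      rintro ⟨p, ⟨v, hv, rfl⟩, q, ⟨w, hw, rfl⟩, rfl⟩
      exact ⟨v + w, st18S_add hv hw, by rw [monomial_mul, one_mul]⟩
    · rintro ⟨v, hv, rfl⟩
      obtain ⟨v', hv', w, hw, rfl⟩ := st18S_succ hv
      exact Set.mem_mul.2 ⟨monomial v' 1, ⟨v', hv', rfl⟩, monomial w 1, ⟨w, hw, rfl⟩,
        by rw [monomial_mul, one_mul]⟩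

lemma st18_span_eq :
    Ideal.span {(X 0 : MvPolynomial (Fin 6) K) * X 1, (X 1 : MvPolynomial (Fin 6) K) * X 2,
        (X 3 : MvPolynomial (Fin 6) K) * X 4, (X 4 : MvPolynomial (Fin 6) K) * X 5}
      = st18J K 1 := by
  have h1 : st18S 1 = {st18g1, st18g2, st18g3, st18g4} := by
    ext v
    constructor
    · rintro ⟨a, b, c, e, hk, rfl⟩
      rcases (by omega : (a = 1 ∧ b = 0 ∧ c = 0 ∧ e = 0) ∨ (b = 1 ∧ a = 0 ∧ c = 0 ∧ e = 0)
          ∨ (c = 1 ∧ a = 0 ∧ b = 0 ∧ e = 0) ∨ (e = 1 ∧ a = 0 ∧ b = 0 ∧ c = 0)) with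
        ⟨rfl, rfl, rfl, rfl⟩ | ⟨rfl, rfl, rfl, rfl⟩ | ⟨rfl, rfl, rfl, rfl⟩ | ⟨rfl, rfl, rfl, rfl⟩ <;>
        simp
    · rintro (rfl | rfl | rfl | rfl)
      exacts [st18S_mem_g1, st18S_mem_g2, st18S_mem_g3, st18S_mem_g4]
  rw [st18J, h1]
  congr 1
  rw [show ({st18g1, st18g2, st18g3, st18g4} : Set (Fin 6 →₀ ℕ))
      = insert st18g1 (insert st18g2 (insert st18g3 {st18g4})) from rfl]
  rw [Set.image_insert_eq, Set.image_insert_eq, Set.image_insert_eq, Set.image_singleton]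
  rw [st18_X_mul_X, st18_X_mul_X, st18_X_mul_X, st18_X_mul_X]
  rfl

end St18

section St18b
variable {K : Type*} [Field K]

/-- the prime `(x0, x2, x3, x5)` -/
noncomputable def st18q (K : Type*) [Field K] : Ideal (MvPolynomial (Fin 6) K) :=
  Ideal.span {X 0, X 2, X 3, X 5}

/-- the retraction killing `x0, x2, x3, x5` -/
noncomputable def st18psi (K : Type*) [Field K] :
    MvPolynomial (Fin 6) K →ₐ[K] MvPolynomial (Fin 6) K :=
  aeval (fun i : Fin 6 => if i = 1 ∨ i = 4 then (X i : MvPolynomial (Fin 6) K) else 0)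

lemma st18_sub_psi_mem (g : MvPolynomial (Fin 6) K) : g - st18psi K g ∈ st18q K := by
  induction g using MvPolynomial.induction_on with
  | C a => simp [st18psi, algebraMap_eq]
  | add p q hp hq =>
    have : p + q - st18psi K (p + q) = (p - st18psi K p) + (q - st18psi K q) := by
      rw [map_add]; ring
    rw [this]; exact add_mem hp hq
  | mul_X p i hp =>
    have hXi : (X i : MvPolynomial (Fin 6) K) - st18psi K (X i) ∈ st18q K := by
      rw [st18psi, aeval_X]
      fin_cases i <;> simp <;>
        exact Ideal.subset_span (by simp)
    have : p * X i - st18psi K (p * X i)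
        = (p - st18psi K p) * X i + st18psi K p * (X i - st18psi K (X i)) := by
      rw [map_mul]; ring
    rw [this]
    exact add_mem (Ideal.mul_mem_right _ _ hp) (Ideal.mul_mem_left _ _ hXi)

lemma st18q_eq_ker : st18q K = RingHom.ker (st18psi K) := by
  apply le_antisymm
  · rw [st18q, Ideal.span_le]
    rintro x (rfl | rfl | rfl | rfl) <;>
      · rw [SetLike.mem_coe, RingHom.mem_ker]
        simp [st18psi]
  · intro g hg
    rw [RingHom.mem_ker] at hg
    have := st18_sub_psi_mem (K := K) g
    rwa [hg, sub_zero] at this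

lemma st18q_prime : (st18q K).IsPrime := by
  rw [st18q_eq_ker]; exact RingHom.ker_isPrime _
end St18b

section St18c
variable {K : Type*} [Field K]

/-- the witness exponent: `x0^j x1^(j+1) x4` -/
noncomputable def st18w (j : ℕ) : Fin 6 →₀ ℕ :=
  Finsupp.single 0 j + Finsupp.single 1 (j + 1) + Finsupp.single 4 1

lemma st18w_f_eq (j : ℕ) :
    (monomial (st18w j) (1 : K))
      = X 0 ^ j * X 1 ^ (j + 1) * X 4 := by
  rw [X_pow_eq_monomial, X_pow_eq_monomial, ← pow_one (X 4), X_pow_eq_monomial,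
    monomial_mul, monomial_mul, one_mul, one_mul, st18w]

lemma st18_g1_mem : (X 0 : MvPolynomial (Fin 6) K) * X 1 ∈ st18J K 1 := by
  rw [st18_X_mul_X]
  exact Ideal.subset_span ⟨st18g1, st18S_mem_g1, rfl⟩

lemma st18_g2_mem : (X 1 : MvPolynomial (Fin 6) K) * X 2 ∈ st18J K 1 := by
  rw [st18_X_mul_X]
  exact Ideal.subset_span ⟨st18g2, st18S_mem_g2, rfl⟩

lemma st18_g3_mem : (X 3 : MvPolynomial (Fin 6) K) * X 4 ∈ st18J K 1 := by
  rw [st18_X_mul_X]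
  exact Ideal.subset_span ⟨st18g3, st18S_mem_g3, rfl⟩

lemma st18_g4_mem : (X 4 : MvPolynomial (Fin 6) K) * X 5 ∈ st18J K 1 := by
  rw [st18_X_mul_X]
  exact Ideal.subset_span ⟨st18g4, st18S_mem_g4, rfl⟩

lemma st18_gen_mul_f_mem (j : ℕ) (x : MvPolynomial (Fin 6) K)
    (hx : x ∈ ({X 0, X 2, X 3, X 5} : Set (MvPolynomial (Fin 6) K))) :
    x * monomial (st18w j) (1 : K) ∈ st18J K (j + 1) := by
  rw [← st18J_pow, st18w_f_eq]
  rcases hx with rfl | rfl | rfl | rfl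
  · have : (X 0 : MvPolynomial (Fin 6) K) * (X 0 ^ j * X 1 ^ (j + 1) * X 4)
        = (X 0 * X 1) ^ (j + 1) * X 4 := by ring
    rw [this]
    exact Ideal.mul_mem_right _ _ (Ideal.pow_mem_pow st18_g1_mem _)
  · have : (X 2 : MvPolynomial (Fin 6) K) * (X 0 ^ j * X 1 ^ (j + 1) * X 4)
        = ((X 0 * X 1) ^ j * (X 1 * X 2)) * X 4 := by ring
    rw [this, pow_succ]
    exact Ideal.mul_mem_right _ _ (Ideal.mul_mem_mul (Ideal.pow_mem_pow st18_g1_mem _) st18_g2_mem)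
  · have : (X 3 : MvPolynomial (Fin 6) K) * (X 0 ^ j * X 1 ^ (j + 1) * X 4)
        = ((X 0 * X 1) ^ j * (X 3 * X 4)) * X 1 := by ring
    rw [this, pow_succ]
    exact Ideal.mul_mem_right _ _ (Ideal.mul_mem_mul (Ideal.pow_mem_pow st18_g1_mem _) st18_g3_mem)
  · have : (X 5 : MvPolynomial (Fin 6) K) * (X 0 ^ j * X 1 ^ (j + 1) * X 4)
        = ((X 0 * X 1) ^ j * (X 4 * X 5)) * X 1 := by ring
    rw [this, pow_succ]
    exact Ideal.mul_mem_right _ _ (Ideal.mul_mem_mul (Ideal.pow_mem_pow st18_g1_mem _) st18_g4_mem)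

lemma st18_colon_eq (j : ℕ) :
    (st18J K (j + 1)).colon (Ideal.span {monomial (st18w j) (1 : K)}) = st18q K := by
  apply le_antisymm
  · intro g hg
    have hgf : g * monomial (st18w j) (1 : K) ∈ st18J K (j + 1) :=
      Ideal.mem_colon_span_singleton.1 hg
    have himg : MvPolynomial.X '' ({0, 2, 3, 5} : Set (Fin 6))
        = ({X 0, X 2, X 3, X 5} : Set (MvPolynomial (Fin 6) K)) := by
      simp [Set.image_insert_eq]
    rw [st18q, ← himg, mem_ideal_span_X_image]
    intro m hm
    by_contra hcon
    push_neg at hcon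
    have hm0 : m 0 = 0 := hcon 0 (by simp)
    have hm2 : m 2 = 0 := hcon 2 (by simp)
    have hm3 : m 3 = 0 := hcon 3 (by simp)
    have hm5 : m 5 = 0 := hcon 5 (by simp)
    -- m + w is in the support of g * f
    have hsupp : m + st18w j ∈ (g * monomial (st18w j) (1 : K)).support := by
      rw [mem_support_iff, coeff_mul_monomial, mul_one]
      exact mem_support_iff.1 hm
    rw [st18J, mem_ideal_span_monomial_image] at hgf
    obtain ⟨v, hvS, hvle⟩ := hgf _ hsupp
    obtain ⟨a, b, c, e, hsum, h0, h1, h2, h3, h4, h5⟩ := st18S_apply hvS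
    have w0 : (st18w j) 0 = j := by simp [st18w, Finsupp.single_apply]
    have w2 : (st18w j) 2 = 0 := by simp [st18w, Finsupp.single_apply]
    have w3 : (st18w j) 3 = 0 := by simp [st18w, Finsupp.single_apply]
    have w5 : (st18w j) 5 = 0 := by simp [st18w, Finsupp.single_apply]
    have i0 : v 0 ≤ m 0 + (st18w j) 0 := hvle 0
    have i2 : v 2 ≤ m 2 + (st18w j) 2 := hvle 2
    have i3 : v 3 ≤ m 3 + (st18w j) 3 := hvle 3
    have i5 : v 5 ≤ m 5 + (st18w j) 5 := hvle 5
    rw [h0, hm0, w0] at i0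
    rw [h2, hm2, w2] at i2
    rw [h3, hm3, w3] at i3
    rw [h5, hm5, w5] at i5
    omega
  · rw [st18q, Ideal.span_le]
    intro x hx
    rw [SetLike.mem_coe, Ideal.mem_colon_span_singleton]
    exact st18_gen_mul_f_mem j x hx

end St18c

section St18d
variable {K : Type*} [Field K]

lemma st18_degree_univ (m : Fin 6 →₀ ℕ) : Finsupp.degree m = ∑ i : Fin 6, m i :=
  Finset.sum_subset (Finset.subset_univ _)
    (fun _ _ hi => Finsupp.notMem_support_iff.1 hi)

lemma st18w_degree (j : ℕ) : Finsupp.degree (st18w j) = 2 * (j + 1) := by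
  rw [st18_degree_univ, Fin.sum_univ_six]
  simp [st18w, Finsupp.single_apply]
  ring

lemma st18_f_homog (j : ℕ) :
    (monomial (st18w j) (1 : K)).IsHomogeneous (2 * (j + 1)) :=
  isHomogeneous_monomial 1 (st18w_degree j)

lemma st18q_isAssociated (j : ℕ) :
    IsAssociatedPrime (st18q K) (MvPolynomial (Fin 6) K ⧸ (st18J K (j + 1))) := by
  refine isAssociatedPrime_iff.2 ⟨st18q_prime, Ideal.Quotient.mk _ (monomial (st18w j) (1 : K)), ?_⟩
  ext r
  rw [Submodule.mem_colon_singleton, Submodule.mem_bot]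
  have hs : r • (Ideal.Quotient.mk (st18J K (j + 1)) (monomial (st18w j) (1 : K)))
      = Ideal.Quotient.mk (st18J K (j + 1)) (r * monomial (st18w j) (1 : K)) := rfl
  rw [hs, Ideal.Quotient.eq_zero_iff_mem, ← Ideal.mem_colon_span_singleton, st18_colon_eq]

lemma st18_smul_g1_mem (k : ℕ) : k • st18g1 ∈ st18S k :=
  ⟨k, 0, 0, 0, by omega, by simp⟩

lemma st18_smul_g3_mem (k : ℕ) : k • st18g3 ∈ st18S k :=
  ⟨0, 0, k, 0, by omega, by simp⟩

lemma st18_extractA {k : ℕ} {m : Fin 6 →₀ ℕ} {α : Fin 6} (hα : α = 0 ∨ α = 1)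
    (h : ∃ v ∈ st18S k, v ≤ m + Finsupp.single α 1) :
    ∃ s t : ℕ, s + t = k ∧ 2 * s ≤ m 0 + m 1 + m 2 + 1 ∧ 2 * t ≤ m 3 + m 4 + m 5 := by
  obtain ⟨v, hvS, hle⟩ := h
  obtain ⟨a, b, c, e, hsum, h0, h1, h2, h3, h4, h5⟩ := st18S_apply hvS
  have hi := fun i => (Finsupp.le_def.1 hle) i
  rcases hα with rfl | rfl
  · have i0 : v 0 ≤ m 0 + 1 := by simpa using hi 0
    have i1 : v 1 ≤ m 1 := by simpa using hi 1
    have i2 : v 2 ≤ m 2 := by simpa using hi 2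
    have i3 : v 3 ≤ m 3 := by simpa using hi 3
    have i4 : v 4 ≤ m 4 := by simpa using hi 4
    have i5 : v 5 ≤ m 5 := by simpa using hi 5
    rw [h0] at i0; rw [h1] at i1; rw [h2] at i2; rw [h3] at i3; rw [h4] at i4; rw [h5] at i5
    exact ⟨a + b, c + e, by omega, by omega, by omega⟩
  · have i0 : v 0 ≤ m 0 := by simpa using hi 0
    have i1 : v 1 ≤ m 1 + 1 := by simpa using hi 1
    have i2 : v 2 ≤ m 2 := by simpa using hi 2
    have i3 : v 3 ≤ m 3 := by simpa using hi 3
    have i4 : v 4 ≤ m 4 := by simpa using hi 4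
    have i5 : v 5 ≤ m 5 := by simpa using hi 5
    rw [h0] at i0; rw [h1] at i1; rw [h2] at i2; rw [h3] at i3; rw [h4] at i4; rw [h5] at i5
    exact ⟨a + b, c + e, by omega, by omega, by omega⟩

lemma st18_extractB {k : ℕ} {m : Fin 6 →₀ ℕ} {β : Fin 6} (hβ : β = 3 ∨ β = 4)
    (h : ∃ v ∈ st18S k, v ≤ m + Finsupp.single β 1) :
    ∃ s t : ℕ, s + t = k ∧ 2 * s ≤ m 0 + m 1 + m 2 ∧ 2 * t ≤ m 3 + m 4 + m 5 + 1 := by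
  obtain ⟨v, hvS, hle⟩ := h
  obtain ⟨a, b, c, e, hsum, h0, h1, h2, h3, h4, h5⟩ := st18S_apply hvS
  have hi := fun i => (Finsupp.le_def.1 hle) i
  rcases hβ with rfl | rfl
  · have i0 : v 0 ≤ m 0 := by simpa using hi 0
    have i1 : v 1 ≤ m 1 := by simpa using hi 1
    have i2 : v 2 ≤ m 2 := by simpa using hi 2
    have i3 : v 3 ≤ m 3 + 1 := by simpa using hi 3
    have i4 : v 4 ≤ m 4 := by simpa using hi 4
    have i5 : v 5 ≤ m 5 := by simpa using hi 5
    rw [h0] at i0; rw [h1] at i1; rw [h2] at i2; rw [h3] at i3; rw [h4] at i4; rw [h5] at i5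
    exact ⟨a + b, c + e, by omega, by omega, by omega⟩
  · have i0 : v 0 ≤ m 0 := by simpa using hi 0
    have i1 : v 1 ≤ m 1 := by simpa using hi 1
    have i2 : v 2 ≤ m 2 := by simpa using hi 2
    have i3 : v 3 ≤ m 3 := by simpa using hi 3
    have i4 : v 4 ≤ m 4 + 1 := by simpa using hi 4
    have i5 : v 5 ≤ m 5 := by simpa using hi 5
    rw [h0] at i0; rw [h1] at i1; rw [h2] at i2; rw [h3] at i3; rw [h4] at i4; rw [h5] at i5
    exact ⟨a + b, c + e, by omega, by omega, by omega⟩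

/-- the combinatorial lower bound -/
lemma st18_lower {k d : ℕ} (hk : 1 ≤ k) {f : MvPolynomial (Fin 6) K}
    {p : Ideal (MvPolynomial (Fin 6) K)}
    (hpAss : IsAssociatedPrime p (MvPolynomial (Fin 6) K ⧸ (st18J K k)))
    (hfh : f.IsHomogeneous d)
    (hcol : (st18J K k).colon (Ideal.span {f}) = p) : 2 * k ≤ d := by
  have hprime : p.IsPrime := hpAss.isPrime
  have hne : f ≠ 0 := by
    rintro rfl
    apply hprime.ne_top
    rw [← hcol, Ideal.eq_top_iff_one, Ideal.mem_colon_span_singleton, mul_zero]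
    exact zero_mem _
  have hJp : st18J K k ≤ p := by
    intro r hr
    rw [← hcol, Ideal.mem_colon_span_singleton]
    exact Ideal.mul_mem_right f _ hr
  have hpow : ∀ v : Fin 6 →₀ ℕ, k • v ∈ st18S k → monomial v (1 : K) ∈ p := by
    intro v hv
    apply hprime.mem_of_pow_mem k
    apply hJp
    rw [monomial_pow, one_pow]
    exact Ideal.subset_span ⟨k • v, hv, rfl⟩
  -- x0 x1 ∈ p gives a variable with index 0 or 1 in p
  have h01 : (X 0 : MvPolynomial (Fin 6) K) * X 1 ∈ p := by
    rw [st18_X_mul_X]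
    exact hpow st18g1 (st18_smul_g1_mem k)
  have h34 : (X 3 : MvPolynomial (Fin 6) K) * X 4 ∈ p := by
    rw [st18_X_mul_X]
    exact hpow st18g3 (st18_smul_g3_mem k)
  have hα : ∃ α : Fin 6, (α = 0 ∨ α = 1) ∧ (X α : MvPolynomial (Fin 6) K) ∈ p := by
    rcases hprime.mem_or_mem h01 with h | h
    exacts [⟨0, Or.inl rfl, h⟩, ⟨1, Or.inr rfl, h⟩]
  have hβ : ∃ β : Fin 6, (β = 3 ∨ β = 4) ∧ (X β : MvPolynomial (Fin 6) K) ∈ p := by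
    rcases hprime.mem_or_mem h34 with h | h
    exacts [⟨3, Or.inl rfl, h⟩, ⟨4, Or.inr rfl, h⟩]
  obtain ⟨α, hα01, hXα⟩ := hα
  obtain ⟨β, hβ34, hXβ⟩ := hβ
  -- a monomial of f
  obtain ⟨m, hm⟩ := (support_nonempty (p := f)).2 hne
  -- its degree is d
  have hdeg : m 0 + m 1 + m 2 + m 3 + m 4 + m 5 = d := by
    have h1 : (Finsupp.weight 1) m = d := hfh (mem_support_iff.1 hm)
    have h2 : Finsupp.degree m = d := by
      rw [Finsupp.degree_eq_weight_one]; exact h1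
    rw [st18_degree_univ, Fin.sum_univ_six] at h2
    exact h2
  -- multiplication by the variables lands in the ideal
  have key : ∀ γ : Fin 6, (X γ : MvPolynomial (Fin 6) K) ∈ p →
      ∃ v ∈ st18S k, v ≤ m + Finsupp.single γ 1 := by
    intro γ hγ
    rw [← hcol] at hγ
    have hXf : (X γ : MvPolynomial (Fin 6) K) * f ∈ st18J K k :=
      Ideal.mem_colon_span_singleton.1 hγ
    have hXf' : f * monomial (Finsupp.single γ 1) 1 ∈ st18J K k := by
      rwa [← X_pow_eq_monomial, pow_one, mul_comm]
    have hsupp : m + Finsupp.single γ 1 ∈ (f * monomial (Finsupp.single γ 1) (1 : K)).support := by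
      rw [mem_support_iff, coeff_mul_monomial, mul_one]
      exact mem_support_iff.1 hm
    rw [st18J, mem_ideal_span_monomial_image] at hXf'
    exact hXf' _ hsupp
  obtain ⟨s, t, hst, hs, ht⟩ := st18_extractA hα01 (key α hXα)
  obtain ⟨s', t', hst', hs', ht'⟩ := st18_extractB hβ34 (key β hXβ)
  omega

end St18d


/-- A graded (homogeneous) ideal: one generated by homogeneous polynomials. -/
def IsHomogeneousIdeal {K : Type*} [Field K] {n : ℕ}
    (I : Ideal (MvPolynomial (Fin n) K)) : Prop :=
  ∃ G : Set (MvPolynomial (Fin n) K),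
    (∀ f ∈ G, ∃ d, f.IsHomogeneous d) ∧ I = Ideal.span G

/-- `Ass(I)`: the associated primes of `S/I`. -/
def Ass {K : Type*} [Field K] {n : ℕ} (I : Ideal (MvPolynomial (Fin n) K)) :
    Set (Ideal (MvPolynomial (Fin n) K)) :=
  associatedPrimes (MvPolynomial (Fin n) K) (MvPolynomial (Fin n) K ⧸ I)

/-- The local v-number `v_p(I)`. -/
noncomputable def vNumberAt {K : Type*} [Field K] {n : ℕ}
    (I p : Ideal (MvPolynomial (Fin n) K)) : ℕ :=
  sInf {d | ∃ f : MvPolynomial (Fin n) K, f.IsHomogeneous d ∧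
    I.colon (Ideal.span {f}) = p}

/-- The v-number `v(I)`. -/
noncomputable def vNumber {K : Type*} [Field K] {n : ℕ}
    (I : Ideal (MvPolynomial (Fin n) K)) : ℕ :=
  sInf {d | ∃ f : MvPolynomial (Fin n) K, ∃ p ∈ Ass I, f.IsHomogeneous d ∧
    I.colon (Ideal.span {f}) = p}

/-- `α(J)`: the least degree of a nonzero element of `J`. -/
noncomputable def alphaNum {K : Type*} [Field K] {n : ℕ}
    (J : Ideal (MvPolynomial (Fin n) K)) : ℕ :=
  sInf {d | ∃ f ∈ J, f ≠ 0 ∧ f.totalDegree = d}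

/-- `c(I) = max{α(p) : p ∈ Ass(I)}`. -/
noncomputable def cNum {K : Type*} [Field K] {n : ℕ}
    (I : Ideal (MvPolynomial (Fin n) K)) : ℕ :=
  sSup (alphaNum '' Ass I)

/-- For `I = ⟨x_1x_2, x_2x_3, x_4x_5, x_5x_6⟩ ⊂ K[x_1,…,x_6]` (the edge
ideal of the disjoint union of two paths on three vertices), `v(I^k) = 2k` for all
`k ≥ 1`; in particular `v(I^k) ≠ 2k − 1` for every `k ≥ 1`. -/
theorem stmt18 {K : Type*} [Field K]
    (I : Ideal (MvPolynomial (Fin 6) K))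
    (hI : I = Ideal.span
      {(X 0 : MvPolynomial (Fin 6) K) * X 1, (X 1 : MvPolynomial (Fin 6) K) * X 2,
       (X 3 : MvPolynomial (Fin 6) K) * X 4, (X 4 : MvPolynomial (Fin 6) K) * X 5}) :
    ∀ k : ℕ, 1 ≤ k → (vNumber (I ^ k) : ℤ) = 2 * k ∧
      (vNumber (I ^ k) : ℤ) ≠ 2 * k - 1 := by
  intro k hk
  obtain ⟨j, rfl⟩ : ∃ j, k = j + 1 := ⟨k - 1, by omega⟩
  have hIk : I ^ (j + 1) = st18J K (j + 1) := by
    rw [hI, st18_span_eq, st18J_pow]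
  have hvn : vNumber (I ^ (j + 1)) = 2 * (j + 1) := by
    rw [hIk]
    unfold vNumber
    apply le_antisymm
    · exact Nat.sInf_le ⟨monomial (st18w j) 1, st18q K, st18q_isAssociated j,
        st18_f_homog j, st18_colon_eq j⟩
    · refine le_csInf ⟨2 * (j + 1), monomial (st18w j) 1, st18q K, st18q_isAssociated j,
        st18_f_homog j, st18_colon_eq j⟩ ?_
      rintro b ⟨f, p, hp, hfh, hcol⟩
      exact st18_lower (by omega) hp hfh hcol
  constructor
  · rw [hvn]; push_cast; ring
  · rw [hvn]; push_cast; omega
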